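/- Suppose μ is an α-dimensional AD-regular measure on ℝⁿ with constant D, and k ∈ ℕ with k < α. Then for every x ∈ supp μ and 0 < r < diam(supp μ), the L^∞ beta number satisfies β_∞^k(x,r)^{α−k} ≥ 4^{−n} D^{−2} ω_n/(ω_k ω_{n−k}), where ω_j is the volume of the unit ball in ℝ^j and β_∞^k(x,r) := inf_{V ∈ Π_k} sup_{z ∈ B(x,r) ∩ supp μ} dist(z,V)/r. -/

import Mathlib

open MeasureTheory Metric

/-- The support of a measure: points whose every neighborhood has positive measure. -/
def msupport {E : Type*} [MeasurableSpace E] [PseudoMetricSpace E] (μ : Measure E) : Set E :=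
  {x | ∀ ε : ℝ, 0 < ε → 0 < μ (ball x ε)}

/-- `β_∞^k(x,r)`: the infimum over affine `k`-planes `V` of
`sup_{z ∈ B(x,r) ∩ supp μ} dist(z,V)/r`. -/
noncomputable def betaInfty {n : ℕ} (μ : Measure (EuclideanSpace ℝ (Fin n))) (k : ℕ)
    (x : EuclideanSpace ℝ (Fin n)) (r : ℝ) : ℝ :=
  ⨅ V : {V : AffineSubspace ℝ (EuclideanSpace ℝ (Fin n)) //
      (V : Set (EuclideanSpace ℝ (Fin n))).Nonempty ∧ Module.finrank ℝ V.direction = k},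
    sSup ((fun z => Metric.infDist z (V.1 : Set (EuclideanSpace ℝ (Fin n))) / r) ''
      (closedBall x r ∩ msupport μ))

/-- The volume of the unit ball of `ℝ^j`. -/
noncomputable def unitBallVol (j : ℕ) : ℝ :=
  (volume (Metric.ball (0 : EuclideanSpace ℝ (Fin j)) 1)).toReal

open Module
open scoped ENNReal
set_option maxHeartbeats 1000000

noncomputable section

abbrev Eu (n : ℕ) := EuclideanSpace ℝ (Fin n)

lemma vol_proj_box {n m : ℕ} (W : Submodule ℝ (Eu n)) (hW : Module.finrank ℝ W = m)
    {a b : ℝ} (ha : 0 ≤ a) (hb : 0 ≤ b) :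
    volume {y : Eu n | ‖(Submodule.orthogonalProjectionOnto W y : Eu n)‖ ≤ a ∧
        ‖(Submodule.orthogonalProjectionOnto Wᗮ y : Eu n)‖ ≤ b} ≤
      ENNReal.ofReal (a ^ m) * volume (ball (0 : Eu m) 1) *
        (ENNReal.ofReal (b ^ (n - m)) * volume (ball (0 : Eu (n - m)) 1)) := by
  classical
  have hE : Module.finrank ℝ (Eu n) = n := finrank_euclideanSpace_fin
  have hmn : m ≤ n := by
    have h1 := Submodule.finrank_le W
    rw [hE] at h1; omega
  have hWm : Module.finrank ℝ (Wᗮ) = n - m := by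
    have h := Submodule.finrank_add_finrank_orthogonal W
    rw [hW, hE] at h; omega
  let b₁ : OrthonormalBasis (Fin m) ℝ W := (stdOrthonormalBasis ℝ W).reindex (finCongr hW)
  let b₂ : OrthonormalBasis (Fin (n - m)) ℝ (Wᗮ : Submodule ℝ (Eu n)) :=
    (stdOrthonormalBasis ℝ (Wᗮ : Submodule ℝ (Eu n))).reindex (finCongr hWm)
  set v : Fin m ⊕ Fin (n - m) → Eu n :=
    Sum.elim (fun i => (b₁ i : Eu n)) (fun j => (b₂ j : Eu n)) with hv
  have hv_mem₁ : ∀ i, v (.inl i) ∈ W := fun i => (b₁ i).2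
  have hv_mem₂ : ∀ j, v (.inr j) ∈ Wᗮ := fun j => (b₂ j).2
  have hon : Orthonormal ℝ v := by
    constructor
    · rintro (i | j)
      · exact b₁.orthonormal.1 i
      · exact b₂.orthonormal.1 j
    · rintro (i | j) (i' | j') hne
      · have := b₁.orthonormal.2 (show i ≠ i' by simpa using hne)
        simpa [hv, Submodule.coe_inner] using this
      · exact Submodule.inner_right_of_mem_orthogonal (hv_mem₁ i) (hv_mem₂ j')
      · exact Submodule.inner_left_of_mem_orthogonal (hv_mem₁ i') (hv_mem₂ j)
      · have := b₂.orthonormal.2 (show j ≠ j' by simpa using hne)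
        simpa [hv, Submodule.coe_inner] using this
  have hsp : ⊤ ≤ Submodule.span ℝ (Set.range v) := by
    have hr : Set.range v = ((W.subtype) '' Set.range b₁) ∪ ((Wᗮ.subtype) '' Set.range b₂) := by
      rw [hv, Set.Sum.elim_range]
      congr 1 <;> · ext y; simp [Set.range_comp]
    have h1 : Submodule.span ℝ (Set.range ⇑b₁) = ⊤ := by
      rw [← b₁.coe_toBasis]; exact b₁.toBasis.span_eq
    have h2 : Submodule.span ℝ (Set.range ⇑b₂) = ⊤ := by
      rw [← b₂.coe_toBasis]; exact b₂.toBasis.span_eq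
    rw [hr, Submodule.span_union, ← Submodule.map_span, ← Submodule.map_span, h1, h2,
      Submodule.map_subtype_top, Submodule.map_subtype_top,
      Submodule.sup_orthogonal_of_hasOrthogonalProjection]
  set B : OrthonormalBasis (Fin m ⊕ Fin (n - m)) ℝ (Eu n) := OrthonormalBasis.mk hon hsp with hB
  have hBv : ∀ j, B j = v j := fun j => by rw [hB, OrthonormalBasis.coe_mk]
  -- coordinates of the two projections
  have key₁ : ∀ y : Eu n, ‖(Submodule.orthogonalProjectionOnto W y : Eu n)‖ ≤ a →
      ∑ i, (B.repr y (Sum.inl i)) ^ 2 ≤ a ^ 2 := by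
    intro y hy
    have h1 : ∀ i, B.repr y (Sum.inl i) =
        inner ℝ (v (Sum.inl i)) ((Submodule.orthogonalProjectionOnto W y : Eu n)) := by
      intro i
      rw [B.repr_apply_apply, hBv]
      have h0 : inner (𝕜 := ℝ) (v (Sum.inl i)) (y - (Submodule.orthogonalProjectionOnto W y : Eu n)) = 0 :=
        Submodule.inner_right_of_mem_orthogonal (hv_mem₁ i)
          (Submodule.sub_starProjection_mem_orthogonal y)
      rw [inner_sub_right] at h0
      linarith
    calc ∑ i, (B.repr y (Sum.inl i)) ^ 2
        = ∑ i, ‖inner (𝕜 := ℝ) ((fun i => v (Sum.inl i)) i)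
            ((Submodule.orthogonalProjectionOnto W y : Eu n))‖ ^ 2 := by
          refine Finset.sum_congr rfl fun i _ => ?_
          rw [h1 i, Real.norm_eq_abs, sq_abs]
      _ ≤ ‖(Submodule.orthogonalProjectionOnto W y : Eu n)‖ ^ 2 :=
          (hon.comp Sum.inl Sum.inl_injective).sum_inner_products_le _
      _ ≤ a ^ 2 := by have := norm_nonneg ((Submodule.orthogonalProjectionOnto W y : Eu n)); nlinarith
  have key₂ : ∀ y : Eu n, ‖(Submodule.orthogonalProjectionOnto Wᗮ y : Eu n)‖ ≤ b →
      ∑ j, (B.repr y (Sum.inr j)) ^ 2 ≤ b ^ 2 := by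
    intro y hy
    have h1 : ∀ j, B.repr y (Sum.inr j) =
        inner ℝ (v (Sum.inr j)) ((Submodule.orthogonalProjectionOnto Wᗮ y : Eu n)) := by
      intro j
      rw [B.repr_apply_apply, hBv]
      have h0 : inner (𝕜 := ℝ) (v (Sum.inr j)) (y - (Submodule.orthogonalProjectionOnto Wᗮ y : Eu n)) = 0 :=
        Submodule.inner_right_of_mem_orthogonal (hv_mem₂ j)
          (Submodule.sub_starProjection_mem_orthogonal y)
      rw [inner_sub_right] at h0
      linarith
    calc ∑ j, (B.repr y (Sum.inr j)) ^ 2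
        = ∑ j, ‖inner (𝕜 := ℝ) ((fun j => v (Sum.inr j)) j)
            ((Submodule.orthogonalProjectionOnto Wᗮ y : Eu n))‖ ^ 2 := by
          refine Finset.sum_congr rfl fun j _ => ?_
          rw [h1 j, Real.norm_eq_abs, sq_abs]
      _ ≤ ‖(Submodule.orthogonalProjectionOnto Wᗮ y : Eu n)‖ ^ 2 :=
          (hon.comp Sum.inr Sum.inr_injective).sum_inner_products_le _
      _ ≤ b ^ 2 := by have := norm_nonneg ((Submodule.orthogonalProjectionOnto Wᗮ y : Eu n)); nlinarith
  set C₁ : Set (Fin m → ℝ) := {u | ∑ i, (u i) ^ 2 ≤ a ^ 2} with hC₁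
  set C₂ : Set (Fin (n - m) → ℝ) := {u | ∑ j, (u j) ^ 2 ≤ b ^ 2} with hC₂
  have hC₁m : MeasurableSet C₁ :=
    measurableSet_le (Finset.measurable_sum _ fun i _ => (measurable_pi_apply i).pow_const 2)
      measurable_const
  have hC₂m : MeasurableSet C₂ :=
    measurableSet_le (Finset.measurable_sum _ fun i _ => (measurable_pi_apply i).pow_const 2)
      measurable_const
  -- identification of C₁, C₂ with closed balls
  have hpre₁ : ((MeasurableEquiv.toLp 2 (Fin m → ℝ)).symm) ⁻¹' C₁ = closedBall (0 : Eu m) a := by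
    ext u
    simp only [Set.mem_preimage, mem_closedBall, dist_zero_right, hC₁, Set.mem_setOf_eq]
    rw [EuclideanSpace.norm_eq, Real.sqrt_le_iff]
    have hequ : ∀ i, ((MeasurableEquiv.toLp 2 (Fin m → ℝ)).symm) u i = u i := fun _ => rfl
    simp only [hequ, Real.norm_eq_abs, sq_abs]
    exact ⟨fun h => ⟨ha, h⟩, fun h => h.2⟩
  have hpre₂ : ((MeasurableEquiv.toLp 2 (Fin (n - m) → ℝ)).symm) ⁻¹' C₂ =
      closedBall (0 : Eu (n - m)) b := by
    ext u
    simp only [Set.mem_preimage, mem_closedBall, dist_zero_right, hC₂, Set.mem_setOf_eq]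
    rw [EuclideanSpace.norm_eq, Real.sqrt_le_iff]
    have hequ : ∀ i, ((MeasurableEquiv.toLp 2 (Fin (n - m) → ℝ)).symm) u i = u i := fun _ => rfl
    simp only [hequ, Real.norm_eq_abs, sq_abs]
    exact ⟨fun h => ⟨hb, h⟩, fun h => h.2⟩
  -- the target set as preimage
  set ψ := MeasurableEquiv.sumPiEquivProdPi (fun _ : Fin m ⊕ Fin (n - m) => ℝ) with hψ
  set φ := (MeasurableEquiv.toLp 2 (Fin m ⊕ Fin (n - m) → ℝ)).symm with hφ
  set S₀ : Set (EuclideanSpace ℝ (Fin m ⊕ Fin (n - m))) := φ ⁻¹' (ψ ⁻¹' (C₁ ×ˢ C₂)) with hS₀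
  have hS₀m : MeasurableSet S₀ := (φ.measurable ((ψ.measurable (hC₁m.prod hC₂m))))
  have hsub : {y : Eu n | ‖(Submodule.orthogonalProjectionOnto W y : Eu n)‖ ≤ a ∧
      ‖(Submodule.orthogonalProjectionOnto Wᗮ y : Eu n)‖ ≤ b} ⊆ ⇑B.repr ⁻¹' S₀ := by
    rintro y ⟨h1, h2⟩
    have hmem : ψ (φ (B.repr y)) ∈ C₁ ×ˢ C₂ := by
      constructor
      · exact key₁ y h1
      · exact key₂ y h2
    exact hmem
  calc volume {y : Eu n | ‖(Submodule.orthogonalProjectionOnto W y : Eu n)‖ ≤ a ∧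
      ‖(Submodule.orthogonalProjectionOnto Wᗮ y : Eu n)‖ ≤ b}
      ≤ volume (⇑B.repr ⁻¹' S₀) := measure_mono hsub
    _ = volume S₀ := B.measurePreserving_repr.measure_preimage hS₀m.nullMeasurableSet
    _ = volume (ψ ⁻¹' (C₁ ×ˢ C₂)) :=
        (EuclideanSpace.volume_preserving_symm_measurableEquiv_toLp _).measure_preimage
          ((ψ.measurable (hC₁m.prod hC₂m))).nullMeasurableSet
    _ = volume (C₁ ×ˢ C₂) :=
        (volume_measurePreserving_sumPiEquivProdPi _).measure_preimage
          (hC₁m.prod hC₂m).nullMeasurableSet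
    _ = volume C₁ * volume C₂ := by rw [Measure.volume_eq_prod, Measure.prod_prod]
    _ = volume (closedBall (0 : Eu m) a) * volume (closedBall (0 : Eu (n - m)) b) := by
        rw [← hpre₁, ← hpre₂,
          (EuclideanSpace.volume_preserving_symm_measurableEquiv_toLp _).measure_preimage
            hC₁m.nullMeasurableSet,
          (EuclideanSpace.volume_preserving_symm_measurableEquiv_toLp _).measure_preimage
            hC₂m.nullMeasurableSet]
    _ = ENNReal.ofReal (a ^ m) * volume (ball (0 : Eu m) 1) *
        (ENNReal.ofReal (b ^ (n - m)) * volume (ball (0 : Eu (n - m)) 1)) := by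
        rw [Measure.addHaar_closedBall _ _ ha, Measure.addHaar_closedBall _ _ hb,
          finrank_euclideanSpace_fin, finrank_euclideanSpace_fin]



lemma exists_net {n : ℕ} (x : Eu n) (r : ℝ) (S : Set (Eu n)) (hSb : S ⊆ closedBall x r)
    {δ : ℝ} (hδ : 0 < δ) :
    ∃ P : Finset (Eu n), ↑P ⊆ S ∧ ((P : Set (Eu n)).Pairwise fun p q => δ ≤ dist p q) ∧
      ∀ z ∈ S, ∃ p ∈ P, dist z p ≤ δ := by
  classical
  obtain ⟨t, htf, hts⟩ :=
    totallyBounded_iff.mp (isCompact_closedBall x r).totallyBounded (δ / 2) (by positivity)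
  set F : Finset (Eu n) → Prop :=
    fun P => ↑P ⊆ S ∧ ((P : Set (Eu n)).Pairwise fun p q => δ ≤ dist p q) with hF
  -- cardinality bound for separated sets
  have hcard : ∀ P, F P → P.card ≤ htf.toFinset.card := by
    intro P hP
    by_contra hcon
    push_neg at hcon
    have hmap : ∀ p ∈ P, ∃ y ∈ htf.toFinset, p ∈ ball y (δ / 2) := by
      intro p hp
      have := hts (hSb (hP.1 hp))
      simp only [Set.mem_iUnion, exists_prop] at this
      obtain ⟨y, hy, hpy⟩ := this
      exact ⟨y, htf.mem_toFinset.mpr hy, hpy⟩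
    set f : Eu n → Eu n := fun p =>
      if h : ∃ y ∈ htf.toFinset, p ∈ ball y (δ / 2) then h.choose else x with hf
    have hfmem : ∀ p ∈ P, f p ∈ htf.toFinset := by
      intro p hp
      show (if h : ∃ y ∈ htf.toFinset, p ∈ ball y (δ / 2) then h.choose else x) ∈ htf.toFinset
      rw [dif_pos (hmap p hp)]
      exact (hmap p hp).choose_spec.1
    obtain ⟨p, hp, p', hp', hne, heq⟩ :=
      Finset.exists_ne_map_eq_of_card_lt_of_maps_to hcon hfmem
    have h1 : p ∈ ball (f p) (δ / 2) := by
      show p ∈ ball (if h : ∃ y ∈ htf.toFinset, p ∈ ball y (δ / 2) then h.choose else x) (δ / 2)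
      rw [dif_pos (hmap p hp)]; exact (hmap p hp).choose_spec.2
    have h2 : p' ∈ ball (f p') (δ / 2) := by
      show p' ∈ ball (if h : ∃ y ∈ htf.toFinset, p' ∈ ball y (δ / 2) then h.choose else x) (δ / 2)
      rw [dif_pos (hmap p' hp')]; exact (hmap p' hp').choose_spec.2
    rw [← heq] at h2
    have : dist p p' < δ := by
      have := dist_triangle p (f p) p'
      rw [mem_ball] at h1 h2
      rw [dist_comm (f p) p'] at this
      linarith
    have := hP.2 hp hp' hne
    linarith
  -- pick a separated set of maximal cardinality
  set Cset : Set ℕ := {c : ℕ | ∃ P : Finset (Eu n), F P ∧ P.card = c} with hCset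
  have hCne : Cset.Nonempty := ⟨0, ∅, ⟨by simp, by simp⟩, by simp⟩
  have hCbdd : BddAbove Cset := by
    refine ⟨htf.toFinset.card, ?_⟩
    rintro c ⟨P, hP, rfl⟩
    exact hcard P hP
  obtain ⟨P, hPF, hPcard⟩ := Nat.sSup_mem hCne hCbdd
  refine ⟨P, hPF.1, hPF.2, ?_⟩
  intro z hz
  by_contra hcon
  push_neg at hcon
  have hzP : z ∉ P := by
    intro h
    have := hcon z h
    simp at this
    linarith
  have hFz : F (insert z P) := by
    constructor
    · rw [Finset.coe_insert]
      exact Set.insert_subset hz hPF.1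
    · rw [Finset.coe_insert]
      refine Set.Pairwise.insert hPF.2 fun p hp hne => ⟨(hcon p hp).le, ?_⟩
      rw [dist_comm]
      exact (hcon p hp).le
  have hle : P.card + 1 ≤ sSup Cset := by
    apply le_csSup hCbdd
    exact ⟨insert z P, hFz, by rw [Finset.card_insert_of_notMem hzP]⟩
  omega

lemma measure_le_inter_msupport {n : ℕ} (μ : Measure (Eu n)) (x : Eu n) (r : ℝ) :
    μ (closedBall x r) ≤ μ (closedBall x r ∩ msupport μ) := by
  have h0 : μ (closedBall x r \ msupport μ) = 0 := by
    apply measure_null_of_locally_null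
    intro y hy
    have hy' : y ∉ msupport μ := hy.2
    simp only [msupport, Set.mem_setOf_eq, not_forall] at hy'
    obtain ⟨ε, hε, h⟩ := hy'
    refine ⟨ball y ε, mem_nhdsWithin_of_mem_nhds (ball_mem_nhds y hε), ?_⟩
    simpa using h
  calc μ (closedBall x r) ≤ μ (closedBall x r ∩ msupport μ) +
        μ (closedBall x r \ msupport μ) := measure_le_inter_add_diff μ _ _
    _ = μ (closedBall x r ∩ msupport μ) := by rw [h0, add_zero]

lemma count_lemma {n : ℕ} (hn : 0 < n) (μ : Measure (Eu n)) (α D : ℝ)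
    (hreg : ∀ x ∈ msupport μ, ∀ r : ℝ, 0 < r →
      ENNReal.ofReal r < EMetric.diam (msupport μ) →
      ENNReal.ofReal (D⁻¹ * r ^ α) ≤ μ (closedBall x r) ∧
        μ (closedBall x r) ≤ ENNReal.ofReal (D * r ^ α))
    (x : Eu n) (hx : x ∈ msupport μ) (r : ℝ) (hr : 0 < r)
    (hr' : ENNReal.ofReal r < EMetric.diam (msupport μ))
    {m : ℕ} (W : Submodule ℝ (Eu n)) (hW : Module.finrank ℝ W = m)
    (q : Eu n) {ε : ℝ} (hε0 : 0 < ε) (hε1 : ε ≤ 2⁻¹) {A B : ℝ}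
    (hA : ∀ z ∈ closedBall x r ∩ msupport μ, ‖z - q‖ + ε * r / 2 ≤ A)
    (hB : ∀ z ∈ closedBall x r ∩ msupport μ,
      ‖(Submodule.orthogonalProjectionOnto Wᗮ (z - q) : Eu n)‖ + ε * r / 2 ≤ B) :
    ∃ N : ℕ,
      ENNReal.ofReal (D⁻¹ * r ^ α) ≤ (N : ℝ≥0∞) * ENNReal.ofReal (D * (ε * r) ^ α) ∧
      (N : ℝ≥0∞) * (ENNReal.ofReal ((ε * r / 2) ^ n) * volume (ball (0 : Eu n) 1)) ≤
        ENNReal.ofReal (A ^ m) * volume (ball (0 : Eu m) 1) *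
          (ENNReal.ofReal (B ^ (n - m)) * volume (ball (0 : Eu (n - m)) 1)) := by
  classical
  haveI : Nonempty (Fin n) := ⟨⟨0, hn⟩⟩
  set S : Set (Eu n) := closedBall x r ∩ msupport μ with hS
  set δ : ℝ := ε * r with hδdef
  have hδ : 0 < δ := by positivity
  have hδr : δ ≤ r / 2 := by
    rw [hδdef]
    calc ε * r ≤ 2⁻¹ * r := by nlinarith
      _ = r / 2 := by ring
  obtain ⟨P, hPS, hPsep, hPcov⟩ := exists_net x r S Set.inter_subset_left hδ
  refine ⟨P.card, ?_, ?_⟩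
  · -- lower bound : covering
    have hcb : ∀ p ∈ P, μ (closedBall p δ) ≤ ENNReal.ofReal (D * δ ^ α) := by
      intro p hp
      have hpm : p ∈ msupport μ := (hPS hp).2
      refine (hreg p hpm δ hδ ?_).2
      calc ENNReal.ofReal δ ≤ ENNReal.ofReal r := ENNReal.ofReal_le_ofReal (by linarith)
        _ < EMetric.diam (msupport μ) := hr'
    calc ENNReal.ofReal (D⁻¹ * r ^ α) ≤ μ (closedBall x r) := (hreg x hx r hr hr').1
      _ ≤ μ S := measure_le_inter_msupport μ x r
      _ ≤ μ (⋃ p ∈ P, closedBall p δ) := by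
          apply measure_mono
          intro z hz
          obtain ⟨p, hp, hzp⟩ := hPcov z hz
          exact Set.mem_biUnion hp (mem_closedBall.mpr hzp)
      _ ≤ ∑ p ∈ P, μ (closedBall p δ) := measure_biUnion_finset_le P _
      _ ≤ ∑ _p ∈ P, ENNReal.ofReal (D * δ ^ α) := Finset.sum_le_sum hcb
      _ = (P.card : ℝ≥0∞) * ENNReal.ofReal (D * δ ^ α) := by
          rw [Finset.sum_const, nsmul_eq_mul]
  · -- upper bound : disjoint balls in the slab
    have hxS : x ∈ S := ⟨mem_closedBall_self hr.le, hx⟩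
    have hA0 : 0 ≤ A := by
      have h1 := hA x hxS
      have h2 := norm_nonneg (x - q)
      nlinarith
    have hB0 : 0 ≤ B := by
      have h1 := hB x hxS
      have h2 := norm_nonneg ((Submodule.orthogonalProjectionOnto Wᗮ (x - q) : Eu n))
      nlinarith
    set T₀ : Set (Eu n) := {y : Eu n | ‖(Submodule.orthogonalProjectionOnto W y : Eu n)‖ ≤ A ∧
        ‖(Submodule.orthogonalProjectionOnto Wᗮ y : Eu n)‖ ≤ B} with hT₀
    set T : Set (Eu n) := (fun y => y - q) ⁻¹' T₀ with hT
    have hproj_le : ∀ (K : Submodule ℝ (Eu n)) (u : Eu n),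
        ‖(Submodule.orthogonalProjectionOnto K u : Eu n)‖ ≤ ‖u‖ := by
      intro K u
      have h := Submodule.orthogonalProjectionOnto_norm_le K
      calc ‖(Submodule.orthogonalProjectionOnto K u : Eu n)‖
          ≤ ‖Submodule.orthogonalProjectionOnto K‖ * ‖u‖ := (Submodule.orthogonalProjectionOnto K).le_opNorm u
        _ ≤ 1 * ‖u‖ := by nlinarith [norm_nonneg u]
        _ = ‖u‖ := one_mul _
    have hsub : ∀ p ∈ P, ball p (δ / 2) ⊆ T := by
      intro p hp y hy
      have hpS := hPS hp
      rw [mem_ball] at hy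
      have hyp : ‖y - p‖ < δ / 2 := by rwa [← dist_eq_norm]
      constructor
      · have h3 : ‖y - q‖ ≤ ‖y - p‖ + ‖p - q‖ := by
          simpa [dist_eq_norm] using dist_triangle y p q
        have h2 := hA p hpS
        calc ‖(Submodule.orthogonalProjectionOnto W (y - q) : Eu n)‖ ≤ ‖y - q‖ := hproj_le _ _
          _ ≤ A := by linarith
      · have hsplit : (y : Eu n) - q = (p - q) + (y - p) := by abel
        have hcoe : (Submodule.orthogonalProjectionOnto Wᗮ (y - q) : Eu n) =
            (Submodule.orthogonalProjectionOnto Wᗮ (p - q) : Eu n) +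
              (Submodule.orthogonalProjectionOnto Wᗮ (y - p) : Eu n) := by
          rw [hsplit, map_add, Submodule.coe_add]
        have h2 := hB p hpS
        have h4 := hproj_le Wᗮ (y - p)
        calc ‖(Submodule.orthogonalProjectionOnto Wᗮ (y - q) : Eu n)‖
            ≤ ‖(Submodule.orthogonalProjectionOnto Wᗮ (p - q) : Eu n)‖ +
              ‖(Submodule.orthogonalProjectionOnto Wᗮ (y - p) : Eu n)‖ := by
              rw [hcoe]; exact norm_add_le _ _
          _ ≤ B := by linarith
    have hdisj : (P : Set (Eu n)).Pairwise (Function.onFun Disjoint fun p => ball p (δ / 2)) := by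
      intro p hp p' hp' hne
      apply ball_disjoint_ball
      have := hPsep hp hp' hne
      linarith
    have hball : ∀ p : Eu n, volume (ball p (δ / 2)) =
        ENNReal.ofReal ((δ / 2) ^ n) * volume (ball (0 : Eu n) 1) := by
      intro p
      rw [Measure.addHaar_ball volume p (by positivity : (0:ℝ) ≤ δ / 2),
        finrank_euclideanSpace_fin]
    calc (P.card : ℝ≥0∞) * (ENNReal.ofReal ((δ / 2) ^ n) * volume (ball (0 : Eu n) 1))
        = ∑ _p ∈ P, (ENNReal.ofReal ((δ / 2) ^ n) * volume (ball (0 : Eu n) 1)) := by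
          rw [Finset.sum_const, nsmul_eq_mul]
      _ = ∑ p ∈ P, volume (ball p (δ / 2)) := Finset.sum_congr rfl fun p _ => (hball p).symm
      _ = volume (⋃ p ∈ P, ball p (δ / 2)) :=
          (measure_biUnion_finset hdisj fun p _ => measurableSet_ball).symm
      _ ≤ volume T := measure_mono (Set.iUnion₂_subset hsub)
      _ = volume T₀ := by
          rw [hT]
          have heq : (fun y : Eu n => y - q) = fun y => -q + y := by
            funext y; rw [sub_eq_neg_add]
          rw [heq]
          exact measure_preimage_add volume (-q) T₀
      _ ≤ ENNReal.ofReal (A ^ m) * volume (ball (0 : Eu m) 1) *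
          (ENNReal.ofReal (B ^ (n - m)) * volume (ball (0 : Eu (n - m)) 1)) :=
          vol_proj_box W hW hA0 hB0

lemma norm_orthProj_le {n : ℕ} (K : Submodule ℝ (Eu n)) (u : Eu n) :
    ‖(Submodule.orthogonalProjectionOnto K u : Eu n)‖ ≤ ‖u‖ := by
  have h := Submodule.orthogonalProjectionOnto_norm_le K
  calc ‖(Submodule.orthogonalProjectionOnto K u : Eu n)‖
      ≤ ‖Submodule.orthogonalProjectionOnto K‖ * ‖u‖ := (Submodule.orthogonalProjectionOnto K).le_opNorm u
    _ ≤ 1 * ‖u‖ := by nlinarith [norm_nonneg u]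
    _ = ‖u‖ := one_mul _


/-- If `μ` is `α`-AD-regular with constant `D` and `k < α`, then for every `x ∈ supp μ` and
`0 < r < diam supp μ`, `β_∞^k(x,r)^{α−k} ≥ 4^{−n} D^{−2} ω_n/(ω_k ω_{n−k})`. -/
theorem stmt13 {n : ℕ} (μ : Measure (EuclideanSpace ℝ (Fin n))) (α D : ℝ)
    (hD : 0 < D)
    (hreg : ∀ x ∈ msupport μ, ∀ r : ℝ, 0 < r →
      ENNReal.ofReal r < EMetric.diam (msupport μ) →
      ENNReal.ofReal (D⁻¹ * r ^ α) ≤ μ (closedBall x r) ∧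
        μ (closedBall x r) ≤ ENNReal.ofReal (D * r ^ α))
    (k : ℕ) (hk : (k : ℝ) < α)
    (x : EuclideanSpace ℝ (Fin n)) (hx : x ∈ msupport μ)
    (r : ℝ) (hr : 0 < r) (hr' : ENNReal.ofReal r < EMetric.diam (msupport μ)) :
    ((4 : ℝ) ^ n)⁻¹ * (D ^ 2)⁻¹ * unitBallVol n / (unitBallVol k * unitBallVol (n - k)) ≤
      betaInfty μ k x r ^ (α - k) := by
  classical
  have hα0 : (0:ℝ) < α := lt_of_le_of_lt (Nat.cast_nonneg k) hk
  have hαk : (0:ℝ) < α - k := by linarith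
  obtain ⟨hlow, hupp⟩ := hreg x hx r hr hr'
  have hrα : (0:ℝ) < r ^ α := Real.rpow_pos_of_pos hr α
  have hD1 : 1 ≤ D := by
    have h := (ENNReal.ofReal_le_ofReal_iff (by positivity)).mp (hlow.trans hupp)
    have h2 : D⁻¹ ≤ D := le_of_mul_le_mul_right h hrα
    nlinarith [mul_inv_cancel₀ (ne_of_gt hD)]
  -- n is positive
  have hn : 0 < n := by
    rcases Nat.eq_zero_or_pos n with h0 | h
    · exfalso
      subst h0
      have hsub : (msupport μ).Subsingleton := fun a _ b _ => PiLp.ext fun i => i.elim0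
      rw [show EMetric.diam (msupport μ) = 0 from EMetric.diam_subsingleton hsub] at hr'
      simp at hr'
    · exact h
  -- volumes
  have hv0 : volume (ball (0 : Eu 0) 1) = 1 := by
    rw [volume_euclideanSpace_eq_dirac]
    exact Measure.dirac_apply_of_mem (mem_ball_self one_pos)
  have hvpos : ∀ j : ℕ, 0 < volume (ball (0 : Eu j) 1) := fun j =>
    measure_ball_pos volume 0 one_pos
  have hvfin : ∀ j : ℕ, volume (ball (0 : Eu j) 1) ≠ ⊤ := fun j =>
    measure_ball_lt_top.ne
  -- α ≤ n
  have hαn : α ≤ (n : ℝ) := by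
    by_contra hcon
    push_neg at hcon
    have hαn' : (0:ℝ) < α - n := by linarith
    set c₀ : ℝ := D⁻¹ * D⁻¹ * (3:ℝ)⁻¹ ^ n * 2⁻¹ with hc₀
    have hc₀0 : (0:ℝ) < c₀ := by positivity
    set ε : ℝ := min 2⁻¹ (c₀ ^ (α - (n:ℝ))⁻¹) with hε
    have hε0 : 0 < ε := lt_min (by norm_num) (Real.rpow_pos_of_pos hc₀0 _)
    have hε1 : ε ≤ 2⁻¹ := min_le_left _ _
    have hεpow : ε ^ (α - (n:ℝ)) ≤ c₀ := by
      calc ε ^ (α - (n:ℝ)) ≤ (c₀ ^ (α - (n:ℝ))⁻¹) ^ (α - (n:ℝ)) :=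
            Real.rpow_le_rpow hε0.le (min_le_right _ _) hαn'.le
        _ = c₀ := by
            rw [← Real.rpow_mul hc₀0.le, inv_mul_cancel₀ hαn'.ne', Real.rpow_one]
    have htop : Module.finrank ℝ (⊤ : Submodule ℝ (Eu n)) = n := by
      rw [finrank_top]; exact finrank_euclideanSpace_fin
    have hBproj : ∀ z : Eu n,
        (Submodule.orthogonalProjectionOnto ((⊤ : Submodule ℝ (Eu n))ᗮ) z : Eu n) = 0 := by
      intro z
      have hz : z ∈ ((⊤ : Submodule ℝ (Eu n))ᗮ)ᗮ :=
        (⊤ : Submodule ℝ (Eu n)).le_orthogonal_orthogonal Submodule.mem_top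
      rw [Submodule.orthogonalProjectionOnto_apply_of_mem_orthogonal hz,
        ZeroMemClass.coe_zero]
    have hA : ∀ z ∈ closedBall x r ∩ msupport μ, ‖z - x‖ + ε * r / 2 ≤ (3/2) * r := by
      intro z hz
      have h1 : ‖z - x‖ ≤ r := by rw [← dist_eq_norm]; exact mem_closedBall.mp hz.1
      nlinarith
    have hB : ∀ z ∈ closedBall x r ∩ msupport μ,
        ‖(Submodule.orthogonalProjectionOnto ((⊤ : Submodule ℝ (Eu n))ᗮ) (z - x) : Eu n)‖ + ε * r / 2 ≤
          ε * r := by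
      intro z hz
      rw [hBproj, norm_zero]
      nlinarith
    obtain ⟨N, h1, h2⟩ := count_lemma hn μ α D hreg x hx r hr hr' ⊤ htop x hε0 hε1 hA hB
    -- realify h1
    have h1R : D⁻¹ * r ^ α ≤ (N:ℝ) * (D * (ε * r) ^ α) := by
      rw [← ENNReal.ofReal_natCast N, ← ENNReal.ofReal_mul (Nat.cast_nonneg N)] at h1
      exact (ENNReal.ofReal_le_ofReal_iff (by positivity)).mp h1
    -- realify h2
    have h2' : (N : ℝ≥0∞) * ENNReal.ofReal ((ε * r / 2) ^ n) ≤
        ENNReal.ofReal (((3:ℝ)/2 * r) ^ n) := by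
      have hh := h2
      rw [Nat.sub_self, pow_zero, ENNReal.ofReal_one, one_mul, hv0, mul_one,
        ← mul_assoc] at hh
      exact (ENNReal.mul_le_mul_iff_left (hvpos n).ne' (hvfin n)).mp hh
    have h2R : (N:ℝ) * (ε * r / 2) ^ n ≤ ((3:ℝ)/2 * r) ^ n := by
      rw [← ENNReal.ofReal_natCast N, ← ENNReal.ofReal_mul (Nat.cast_nonneg N)] at h2'
      exact (ENNReal.ofReal_le_ofReal_iff (by positivity)).mp h2'
    -- real algebra
    have e1 : D⁻¹ ≤ (N:ℝ) * (D * ε ^ α) := by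
      have hmr : (ε * r) ^ α = ε ^ α * r ^ α := Real.mul_rpow hε0.le hr.le
      rw [hmr] at h1R
      have h' : (N:ℝ) * (D * (ε ^ α * r ^ α)) = ((N:ℝ) * (D * ε ^ α)) * r ^ α := by ring
      rw [h'] at h1R
      exact le_of_mul_le_mul_right h1R hrα
    have e2 : (N:ℝ) * (ε / 2) ^ n ≤ ((3:ℝ)/2) ^ n := by
      have ha : (ε * r / 2) ^ n = (ε / 2) ^ n * r ^ n := by
        rw [← mul_pow]; congr 1; ring
      have hb : ((3:ℝ)/2 * r) ^ n = ((3:ℝ)/2) ^ n * r ^ n := mul_pow _ _ _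
      rw [ha, hb, ← mul_assoc] at h2R
      exact le_of_mul_le_mul_right h2R (pow_pos hr n)
    have e3 : (N:ℝ) * ε ^ n ≤ 3 ^ n := by
      have h2n : ((ε:ℝ) / 2) ^ n * 2 ^ n = ε ^ n := by
        rw [← mul_pow]; congr 1; ring
      calc (N:ℝ) * ε ^ n = ((N:ℝ) * (ε / 2) ^ n) * 2 ^ n := by rw [mul_assoc, h2n]
        _ ≤ ((3:ℝ)/2) ^ n * 2 ^ n := by
            apply mul_le_mul_of_nonneg_right e2 (by positivity)
        _ = 3 ^ n := by rw [← mul_pow]; norm_num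
    have hsplit : ε ^ α = ε ^ n * ε ^ (α - (n:ℝ)) := by
      rw [← Real.rpow_natCast ε n, ← Real.rpow_add hε0]
      congr 1; ring
    have hu0 : (0:ℝ) < ε ^ (α - (n:ℝ)) := Real.rpow_pos_of_pos hε0 _
    have e4 : D⁻¹ ≤ 3 ^ n * (D * ε ^ (α - (n:ℝ))) := by
      calc D⁻¹ ≤ (N:ℝ) * (D * ε ^ α) := e1
        _ = ((N:ℝ) * ε ^ n) * (D * ε ^ (α - (n:ℝ))) := by rw [hsplit]; ring
        _ ≤ 3 ^ n * (D * ε ^ (α - (n:ℝ))) := by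
            apply mul_le_mul_of_nonneg_right e3 (by positivity)
    have e5 : 3 ^ n * (D * ε ^ (α - (n:ℝ))) ≤ 3 ^ n * (D * c₀) := by
      have := hεpow
      gcongr
    have hfin : (3:ℝ) ^ n * (D * c₀) = D⁻¹ * 2⁻¹ := by
      rw [hc₀]
      have h3 : (3:ℝ) ^ n * (3:ℝ)⁻¹ ^ n = 1 := by
        rw [← mul_pow]; norm_num
      field_simp
      nlinarith [h3]
    rw [hfin] at e5
    have : (0:ℝ) < D⁻¹ := by positivity
    linarith [e4.trans e5]
  -- k < n and a subspace of rank k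
  have hkn : k < n := by
    have : (k:ℝ) < (n:ℝ) := lt_of_lt_of_le hk hαn
    exact_mod_cast this
  obtain ⟨W, hWrank⟩ : ∃ W : Submodule ℝ (Eu n), Module.finrank ℝ W = k := by
    have hli : LinearIndependent ℝ
        (fun i : Fin k => (EuclideanSpace.basisFun (Fin n) ℝ).toBasis (Fin.castLE hkn.le i)) :=
      (EuclideanSpace.basisFun (Fin n) ℝ).toBasis.linearIndependent.comp _
        (Fin.castLE_injective hkn.le)
    exact ⟨Submodule.span ℝ (Set.range _),
      by rw [finrank_span_eq_card hli, Fintype.card_fin]⟩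
  -- volume of unit ball vs product of unit balls
  have hvol_le : volume (ball (0 : Eu n) 1) ≤
      volume (ball (0 : Eu k) 1) * volume (ball (0 : Eu (n - k)) 1) := by
    have hsub : ball (0 : Eu n) 1 ⊆ {y : Eu n | ‖(Submodule.orthogonalProjectionOnto W y : Eu n)‖ ≤ 1 ∧
        ‖(Submodule.orthogonalProjectionOnto Wᗮ y : Eu n)‖ ≤ 1} := by
      intro y hy
      rw [mem_ball, dist_zero_right] at hy
      exact ⟨le_trans (norm_orthProj_le W y) hy.le,
        le_trans (norm_orthProj_le Wᗮ y) hy.le⟩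
    calc volume (ball (0 : Eu n) 1)
        ≤ volume {y : Eu n | ‖(Submodule.orthogonalProjectionOnto W y : Eu n)‖ ≤ 1 ∧
          ‖(Submodule.orthogonalProjectionOnto Wᗮ y : Eu n)‖ ≤ 1} := measure_mono hsub
      _ ≤ ENNReal.ofReal (1 ^ k) * volume (ball (0 : Eu k) 1) *
          (ENNReal.ofReal (1 ^ (n - k)) * volume (ball (0 : Eu (n - k)) 1)) :=
          vol_proj_box W hWrank zero_le_one zero_le_one
      _ = volume (ball (0 : Eu k) 1) * volume (ball (0 : Eu (n - k)) 1) := by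
          simp
  -- real unit ball volumes
  set un : ℝ := unitBallVol n with hun
  set uk : ℝ := unitBallVol k with huk
  set unk : ℝ := unitBallVol (n - k) with hunk
  have hun_pos : 0 < un := ENNReal.toReal_pos (hvpos n).ne' (hvfin n)
  have huk_pos : 0 < uk := ENNReal.toReal_pos (hvpos k).ne' (hvfin k)
  have hunk_pos : 0 < unk := ENNReal.toReal_pos (hvpos (n - k)).ne' (hvfin (n - k))
  have hun_le : un ≤ uk * unk := by
    have h := ENNReal.toReal_mono (ENNReal.mul_ne_top (hvfin k) (hvfin (n - k))) hvol_le
    rwa [ENNReal.toReal_mul] at h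
  -- the constant and the threshold
  set c : ℝ := ((4 : ℝ) ^ n)⁻¹ * (D ^ 2)⁻¹ * un / (uk * unk) with hc
  have hc0 : 0 < c := by positivity
  have hc_le : c ≤ ((4:ℝ)^n)⁻¹ := by
    rw [hc]
    rw [div_le_iff₀ (by positivity)]
    have h1 : (D ^ 2)⁻¹ ≤ 1 := by
      rw [inv_le_one_iff₀]
      right; nlinarith
    calc ((4 : ℝ) ^ n)⁻¹ * (D ^ 2)⁻¹ * un ≤ ((4 : ℝ) ^ n)⁻¹ * 1 * (uk * unk) := by
          apply mul_le_mul _ hun_le hun_pos.le (by positivity)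
          apply mul_le_mul_of_nonneg_left h1 (by positivity)
      _ = ((4:ℝ)^n)⁻¹ * (uk * unk) := by ring
  set θ : ℝ := c ^ (α - (k:ℝ))⁻¹ with hθ
  have hθ0 : 0 < θ := Real.rpow_pos_of_pos hc0 _
  have hθc : θ ^ (α - (k:ℝ)) = c := by
    rw [hθ, ← Real.rpow_mul hc0.le, inv_mul_cancel₀ hαk.ne', Real.rpow_one]
  have hθ14 : θ ≤ 4⁻¹ := by
    have h1 : θ ≤ (((4:ℝ)^n)⁻¹) ^ (α - (k:ℝ))⁻¹ :=
      Real.rpow_le_rpow hc0.le hc_le (by positivity)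
    have h2 : ((((4:ℝ)^n))⁻¹) ^ (α - (k:ℝ))⁻¹ = (4:ℝ) ^ (-((n:ℝ) * (α - (k:ℝ))⁻¹)) := by
      rw [← Real.rpow_natCast (4:ℝ) n, ← Real.rpow_neg (by norm_num),
        ← Real.rpow_mul (by norm_num)]
      congr 1; ring
    have h3 : (4:ℝ) ^ (-((n:ℝ) * (α - (k:ℝ))⁻¹)) ≤ (4:ℝ) ^ (-1 : ℝ) := by
      apply Real.rpow_le_rpow_of_exponent_le (by norm_num)
      have hle : α - (k:ℝ) ≤ (n:ℝ) := by
        have hk0 : (0:ℝ) ≤ (k:ℝ) := Nat.cast_nonneg k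
        linarith
      have hinv : (0:ℝ) < (α - (k:ℝ))⁻¹ := by positivity
      have : (1:ℝ) ≤ (n:ℝ) * (α - (k:ℝ))⁻¹ := by
        rw [← mul_inv_cancel₀ hαk.ne']
        exact mul_le_mul_of_nonneg_right hle hinv.le
      linarith
    have h4 : (4:ℝ) ^ (-1:ℝ) = 4⁻¹ := by
      rw [Real.rpow_neg_one]
    rw [h2] at h1
    rw [h4] at h3
    linarith
  -- the per-plane lower bound
  have hplane : ∀ V : {V : AffineSubspace ℝ (EuclideanSpace ℝ (Fin n)) //
      (V : Set (EuclideanSpace ℝ (Fin n))).Nonempty ∧ Module.finrank ℝ V.direction = k},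
      θ ≤ sSup ((fun z => Metric.infDist z (V.1 : Set (EuclideanSpace ℝ (Fin n))) / r) ''
        (closedBall x r ∩ msupport μ)) := by
    rintro ⟨V, hVne, hVrank⟩
    have hxS : x ∈ closedBall x r ∩ msupport μ := ⟨mem_closedBall_self hr.le, hx⟩
    obtain ⟨q₀, hq₀⟩ := hVne
    have hbdd : BddAbove ((fun z => Metric.infDist z (V : Set (Eu n)) / r) ''
        (closedBall x r ∩ msupport μ)) := by
      refine ⟨(r + dist x q₀) / r, ?_⟩
      rintro _ ⟨z, hz, rfl⟩
      show Metric.infDist z (V : Set (Eu n)) / r ≤ (r + dist x q₀) / r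
      have h1 : Metric.infDist z (V : Set (Eu n)) ≤ dist z q₀ :=
        Metric.infDist_le_dist_of_mem hq₀
      have h2 : dist z q₀ ≤ dist z x + dist x q₀ := dist_triangle z x q₀
      have h3 : dist z x ≤ r := mem_closedBall.mp hz.1
      have h4 : Metric.infDist z (V : Set (Eu n)) ≤ r + dist x q₀ := by linarith
      gcongr
    by_contra hcon
    push_neg at hcon
    have hmem_lt : ∀ z ∈ closedBall x r ∩ msupport μ,
        Metric.infDist z (V : Set (Eu n)) < θ * r := by
      intro z hz
      have h1 : Metric.infDist z (V : Set (Eu n)) / r ≤ _ := le_csSup hbdd ⟨z, hz, rfl⟩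
      have h2 : Metric.infDist z (V : Set (Eu n)) / r < θ := lt_of_le_of_lt h1 hcon
      have := mul_lt_mul_of_pos_right h2 hr
      rwa [div_mul_cancel₀ _ hr.ne'] at this
    obtain ⟨q, hqV, hqx⟩ := (Metric.infDist_lt_iff ⟨q₀, hq₀⟩).mp (hmem_lt x hxS)
    have hθr4 : θ * r ≤ 4⁻¹ * r := mul_le_mul_of_nonneg_right hθ14 hr.le
    have hA : ∀ z ∈ closedBall x r ∩ msupport μ, ‖z - q‖ + θ * r / 2 ≤ 2 * r := by
      intro z hz
      have h1 : dist z x ≤ r := mem_closedBall.mp hz.1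
      have h2 : ‖z - q‖ ≤ dist z x + dist x q := by
        rw [← dist_eq_norm]; exact dist_triangle z x q
      linarith
    have hB : ∀ z ∈ closedBall x r ∩ msupport μ,
        ‖(Submodule.orthogonalProjectionOnto V.directionᗮ (z - q) : Eu n)‖ + θ * r / 2 ≤
          (3/2) * (θ * r) := by
      intro z hz
      obtain ⟨v, hvV, hzv⟩ := (Metric.infDist_lt_iff ⟨q₀, hq₀⟩).mp (hmem_lt z hz)
      have hvq : v - q ∈ V.direction := AffineSubspace.vsub_mem_direction hvV hqV
      have hproj0 : (Submodule.orthogonalProjectionOnto V.directionᗮ (v - q) : Eu n) = 0 := by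
        have hm : v - q ∈ (V.directionᗮ)ᗮ := V.direction.le_orthogonal_orthogonal hvq
        rw [Submodule.orthogonalProjectionOnto_apply_of_mem_orthogonal hm,
          ZeroMemClass.coe_zero]
      have hsplit : z - q = (z - v) + (v - q) := by abel
      have heq : (Submodule.orthogonalProjectionOnto V.directionᗮ (z - q) : Eu n) =
          (Submodule.orthogonalProjectionOnto V.directionᗮ (z - v) : Eu n) := by
        rw [hsplit, map_add, Submodule.coe_add, hproj0, add_zero]
      rw [heq]
      have h4 := norm_orthProj_le V.directionᗮ (z - v)
      have h5 : ‖z - v‖ < θ * r := by rw [dist_eq_norm] at hzv; exact hzv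
      linarith
    obtain ⟨N, h1, h2⟩ := count_lemma hn μ α D hreg x hx r hr hr' V.direction hVrank q hθ0
      (le_trans hθ14 (by norm_num)) hA hB
    -- realify
    have h1R : D⁻¹ * r ^ α ≤ (N:ℝ) * (D * (θ * r) ^ α) := by
      rw [← ENNReal.ofReal_natCast N, ← ENNReal.ofReal_mul (Nat.cast_nonneg N)] at h1
      exact (ENNReal.ofReal_le_ofReal_iff (by positivity)).mp h1
    have h2R : (N:ℝ) * ((θ * r / 2) ^ n * un) ≤
        (2 * r) ^ k * uk * (((3:ℝ)/2 * (θ * r)) ^ (n - k) * unk) := by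
      have hfin1 : ENNReal.ofReal ((2 * r) ^ k) * volume (ball (0 : Eu k) 1) *
          (ENNReal.ofReal (((3:ℝ)/2 * (θ * r)) ^ (n - k)) * volume (ball (0 : Eu (n - k)) 1))
          ≠ ⊤ := by
        apply ENNReal.mul_ne_top (ENNReal.mul_ne_top ENNReal.ofReal_ne_top (hvfin k))
          (ENNReal.mul_ne_top ENNReal.ofReal_ne_top (hvfin (n - k)))
      have h := ENNReal.toReal_mono hfin1 h2
      simp only [ENNReal.toReal_mul, ENNReal.toReal_natCast,
        ENNReal.toReal_ofReal (show (0:ℝ) ≤ (θ * r / 2) ^ n by positivity),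
        ENNReal.toReal_ofReal (show (0:ℝ) ≤ (2 * r) ^ k by positivity),
        ENNReal.toReal_ofReal (show (0:ℝ) ≤ ((3:ℝ)/2 * (θ * r)) ^ (n - k) by positivity)] at h
      exact h
    -- real algebra
    have e1 : D⁻¹ ≤ (N:ℝ) * (D * θ ^ α) := by
      have hmr : (θ * r) ^ α = θ ^ α * r ^ α := Real.mul_rpow hθ0.le hr.le
      rw [hmr] at h1R
      have h' : (N:ℝ) * (D * (θ ^ α * r ^ α)) = ((N:ℝ) * (D * θ ^ α)) * r ^ α := by ring
      rw [h'] at h1R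
      exact le_of_mul_le_mul_right h1R hrα
    have e2 : (N:ℝ) * ((θ/2) ^ n * un) ≤ 2 ^ k * uk * (((3:ℝ)/2 * θ) ^ (n - k) * unk) := by
      have ha : (θ * r / 2) ^ n = (θ / 2) ^ n * r ^ n := by
        rw [← mul_pow]; congr 1; ring
      have hb : ((2:ℝ) * r) ^ k = 2 ^ k * r ^ k := mul_pow _ _ _
      have hcc : ((3:ℝ)/2 * (θ * r)) ^ (n - k) = ((3:ℝ)/2 * θ) ^ (n - k) * r ^ (n - k) := by
        rw [← mul_pow]; congr 1; ring
      have hrkn : (r:ℝ) ^ k * r ^ (n - k) = r ^ n := by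
        rw [← pow_add]; congr 1; omega
      have h' : (N:ℝ) * ((θ / 2) ^ n * r ^ n * un) ≤
          2 ^ k * r ^ k * uk * (((3:ℝ)/2 * θ) ^ (n - k) * r ^ (n - k) * unk) := by
        rw [← ha, ← hb, ← hcc]; exact h2R
      have hL : (N:ℝ) * ((θ / 2) ^ n * r ^ n * un) = ((N:ℝ) * ((θ/2) ^ n * un)) * r ^ n := by
        ring
      have hR : (2:ℝ) ^ k * r ^ k * uk * (((3:ℝ)/2 * θ) ^ (n - k) * r ^ (n - k) * unk) =
          (2 ^ k * uk * (((3:ℝ)/2 * θ) ^ (n - k) * unk)) * r ^ n := by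
        rw [← hrkn]; ring
      rw [hL, hR] at h'
      exact le_of_mul_le_mul_right h' (pow_pos hr n)
    -- split θ powers
    have hθnk_pos : (0:ℝ) < θ ^ (n - k) := pow_pos hθ0 _
    have e2' : (N:ℝ) * (θ ^ k * un) ≤ 4 ^ k * 3 ^ (n - k) * (uk * unk) := by
      have a1 : (4:ℝ) ^ k = 2 ^ k * 2 ^ k := by rw [← mul_pow]; norm_num
      have a2 : (3:ℝ) ^ (n - k) = ((3:ℝ)/2) ^ (n - k) * 2 ^ (n - k) := by
        rw [← mul_pow]; norm_num
      have a3 : (2:ℝ) ^ n = 2 ^ k * 2 ^ (n - k) := by rw [← pow_add]; congr 1; omega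
      have a4 : ((3:ℝ)/2 * θ) ^ (n - k) = ((3:ℝ)/2) ^ (n - k) * θ ^ (n - k) :=
        mul_pow _ _ _
      have a5 : ((θ:ℝ)/2) ^ n * 2 ^ n = θ ^ n := by rw [← mul_pow]; congr 1; ring
      have a6 : (θ:ℝ) ^ n = θ ^ k * θ ^ (n - k) := by rw [← pow_add]; congr 1; omega
      have h' := mul_le_mul_of_nonneg_right e2 (by positivity : (0:ℝ) ≤ 2 ^ n)
      have hL : ((N:ℝ) * ((θ/2) ^ n * un)) * 2 ^ n = ((N:ℝ) * (θ ^ k * un)) * θ ^ (n - k) := by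
        calc ((N:ℝ) * ((θ/2) ^ n * un)) * 2 ^ n = (N:ℝ) * un * ((θ/2) ^ n * 2 ^ n) := by ring
          _ = (N:ℝ) * un * θ ^ n := by rw [a5]
          _ = ((N:ℝ) * (θ ^ k * un)) * θ ^ (n - k) := by rw [a6]; ring
      have hR : (2:ℝ) ^ k * uk * (((3:ℝ)/2 * θ) ^ (n - k) * unk) * 2 ^ n =
          (4 ^ k * 3 ^ (n - k) * (uk * unk)) * θ ^ (n - k) := by
        rw [a4, a3, a1, a2]; ring
      rw [hL, hR] at h'
      exact le_of_mul_le_mul_right h' hθnk_pos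
    -- combine
    have hsplitα : θ ^ α = θ ^ k * c := by
      rw [← hθc, ← Real.rpow_natCast θ k, ← Real.rpow_add hθ0]
      congr 1; ring
    have e1' : 1 ≤ (N:ℝ) * θ ^ k * (D ^ 2 * c) := by
      have h' := mul_le_mul_of_nonneg_left e1 hD.le
      rw [mul_inv_cancel₀ hD.ne'] at h'
      calc (1:ℝ) ≤ D * ((N:ℝ) * (D * θ ^ α)) := h'
        _ = (N:ℝ) * θ ^ k * (D ^ 2 * c) := by rw [hsplitα]; ring
    have hD2c : D ^ 2 * c = ((4:ℝ)^n)⁻¹ * (un / (uk * unk)) := by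
      rw [hc]
      field_simp
    have hfinal : un ≤ 4 ^ k * 3 ^ (n - k) * (((4:ℝ)^n)⁻¹ * un) := by
      have s1 : un ≤ ((N:ℝ) * θ ^ k * (D ^ 2 * c)) * un := by
        nlinarith [e1', hun_pos]
      have s2 : ((N:ℝ) * θ ^ k * (D ^ 2 * c)) * un = ((N:ℝ) * (θ ^ k * un)) * (D ^ 2 * c) := by
        ring
      have s3 : ((N:ℝ) * (θ ^ k * un)) * (D ^ 2 * c) ≤
          (4 ^ k * 3 ^ (n - k) * (uk * unk)) * (D ^ 2 * c) := by
        apply mul_le_mul_of_nonneg_right e2' (by positivity)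
      have s4 : (4 ^ k * 3 ^ (n - k) * (uk * unk)) * (D ^ 2 * c) =
          4 ^ k * 3 ^ (n - k) * (((4:ℝ)^n)⁻¹ * un) := by
        rw [hD2c]
        field_simp
      calc un ≤ ((N:ℝ) * θ ^ k * (D ^ 2 * c)) * un := s1
        _ = ((N:ℝ) * (θ ^ k * un)) * (D ^ 2 * c) := s2
        _ ≤ (4 ^ k * 3 ^ (n - k) * (uk * unk)) * (D ^ 2 * c) := s3
        _ = 4 ^ k * 3 ^ (n - k) * (((4:ℝ)^n)⁻¹ * un) := s4
    have hlt : (4:ℝ) ^ k * 3 ^ (n - k) < 4 ^ n := by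
      have h1 : (3:ℝ) ^ (n - k) < 4 ^ (n - k) := by
        apply pow_lt_pow_left₀ (by norm_num) (by norm_num)
        omega
      have h2 : (4:ℝ) ^ k * 4 ^ (n - k) = 4 ^ n := by rw [← pow_add]; congr 1; omega
      have h3 := mul_lt_mul_of_pos_left h1 (by positivity : (0:ℝ) < 4 ^ k)
      linarith
    have h4n : (0:ℝ) < (4:ℝ)^n := by positivity
    have hmul := mul_lt_mul_of_pos_right hlt (mul_pos (inv_pos.mpr h4n) hun_pos)
    have heqq : (4:ℝ)^n * (((4:ℝ)^n)⁻¹ * un) = un := by field_simp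
    linarith
  -- conclude
  haveI : Nonempty {V : AffineSubspace ℝ (EuclideanSpace ℝ (Fin n)) //
      (V : Set (EuclideanSpace ℝ (Fin n))).Nonempty ∧ Module.finrank ℝ V.direction = k} := by
    refine ⟨⟨AffineSubspace.mk' x W, ⟨x, AffineSubspace.self_mem_mk' x W⟩, ?_⟩⟩
    rw [AffineSubspace.direction_mk']
    exact hWrank
  have hβ : θ ≤ betaInfty μ k x r := le_ciInf hplane
  calc c = θ ^ (α - (k:ℝ)) := hθc.symm
    _ ≤ betaInfty μ k x r ^ (α - (k:ℝ)) := Real.rpow_le_rpow hθ0.le hβ (by linarith)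

end
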